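/- For every positive integer n, there is a unique finite sequence of 0/1 coefficients (ε(1),...,ε(t)) with ε(1)=1 and ε(k)·ε(k+1)=0 for all k < t, such that n = Σ_{k=1}^t ε(k)·F_{t-k+1}, where F is the shifted Fibonacci sequence with F_1=1, F_2=2, F_{n+2}=F_{n+1}+F_n (Zeckendorf's theorem). -/

import Mathlib

open Finset

/-- Sum of `fib (j+1)` over a set of non-consecutive indices bounded by `t` is `< fib (t+2)`. -/
lemma zeck_sum_lt : ∀ t : ℕ, ∀ S : Finset ℕ, (∀ a ∈ S, 1 ≤ a) → (∀ a ∈ S, a + 1 ∉ S) →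
    (∀ a ∈ S, a ≤ t) → ∑ j ∈ S, Nat.fib (j + 1) < Nat.fib (t + 2) := by
  intro t
  induction t using Nat.strong_induction_on with
  | _ t ih =>
    intro S h1 h2 hbd
    match t with
    | 0 =>
      have : S = ∅ := by
        apply Finset.eq_empty_of_forall_notMem
        intro a ha
        have := h1 a ha; have := hbd a ha; omega
      simp [this]
    | (t+1) =>
      by_cases ht : t + 1 ∈ S
      · have htS : t ∉ S := fun h => h2 t h ht
        have hsum : ∑ j ∈ S.erase (t+1), Nat.fib (j+1) + Nat.fib (t+1+1) =
            ∑ j ∈ S, Nat.fib (j+1) := Finset.sum_erase_add _ _ ht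
        rcases Nat.eq_zero_or_pos t with rfl | htpos
        · have he : S.erase 1 = ∅ := by
            apply Finset.eq_empty_of_forall_notMem
            intro a ha
            have ha' := Finset.mem_of_mem_erase ha
            have := h1 a ha'; have := hbd a ha'
            have := Finset.ne_of_mem_erase ha
            omega
          rw [he] at hsum
          simp only [Finset.sum_empty, Nat.zero_add] at hsum
          rw [← hsum]
          simp [Nat.fib]
        · have hlt : ∑ j ∈ S.erase (t+1), Nat.fib (j+1) < Nat.fib (t-1+2) := by
            apply ih (t-1) (by omega)
            · exact fun a ha => h1 a (Finset.mem_of_mem_erase ha)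
            · intro a ha hc
              exact h2 a (Finset.mem_of_mem_erase ha) (Finset.mem_of_mem_erase hc)
            · intro a ha
              have ha' := Finset.mem_of_mem_erase ha
              have := hbd a ha'
              have hne := Finset.ne_of_mem_erase ha
              have : a ≠ t := fun h => htS (h ▸ ha')
              omega
          have h1' : t - 1 + 2 = t + 1 := by omega
          rw [h1'] at hlt
          have hfib : Nat.fib (t+1+2) = Nat.fib (t+1) + Nat.fib (t+1+1) := Nat.fib_add_two
          omega
      · have : ∑ j ∈ S, Nat.fib (j+1) < Nat.fib (t+2) := by
          apply ih t (by omega) S h1 h2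
          intro a ha
          have := hbd a ha
          have : a ≠ t + 1 := fun h => ht (h ▸ ha)
          omega
        have h2 : Nat.fib (t+2) ≤ Nat.fib (t+3) := Nat.fib_mono (by omega)
        have h3 : Nat.fib (t + 1 + 2) = Nat.fib (t + 3) := rfl
        omega

/-- Existence of the Zeckendorf set. -/
lemma zeck_exists : ∀ n : ℕ, ∃ S : Finset ℕ, (∀ a ∈ S, 1 ≤ a) ∧ (∀ a ∈ S, a + 1 ∉ S) ∧
    (∀ a ∈ S, Nat.fib (a + 1) ≤ n) ∧ n = ∑ j ∈ S, Nat.fib (j + 1) := by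
  intro n
  induction n using Nat.strong_induction_on with
  | _ n ih =>
    rcases Nat.eq_zero_or_pos n with rfl | hn
    · exact ⟨∅, by simp⟩
    · set g := n.greatestFib with hg
      have hg2 : 2 ≤ g := Nat.le_greatestFib.2 (by simp; omega)
      have hfg : Nat.fib g ≤ n := Nat.fib_greatestFib_le n
      set r := n - Nat.fib g with hr
      have hrlt : r < n := by
        have : 0 < Nat.fib g := Nat.fib_pos.2 (by omega)
        omega
      have hrbd : Nat.greatestFib r ≤ g - 2 :=
        Nat.greatestFib_sub_fib_greatestFib_le_greatestFib (by omega)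
      obtain ⟨S', h1, h2, h3, h4⟩ := ih r hrlt
      have hS'bd : ∀ a ∈ S', a + 1 ≤ g - 2 := by
        intro a ha
        have : Nat.fib (a + 1) ≤ r := h3 a ha
        have := Nat.le_greatestFib.2 this
        omega
      refine ⟨insert (g - 1) S', ?_, ?_, ?_, ?_⟩
      · intro a ha
        rcases Finset.mem_insert.1 ha with rfl | h
        · omega
        · exact h1 a h
      · intro a ha hc
        rcases Finset.mem_insert.1 ha with rfl | h
        · rcases Finset.mem_insert.1 hc with h' | h'
          · omega
          · have := hS'bd _ h'; omega
        · rcases Finset.mem_insert.1 hc with h' | h'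
          · have := hS'bd a h; omega
          · exact h2 a h h'
      · intro a ha
        rcases Finset.mem_insert.1 ha with rfl | h
        · have : g - 1 + 1 = g := by omega
          rw [this]; exact hfg
        · have := h3 a h; omega
      · have hnot : g - 1 ∉ S' := by
          intro h; have := hS'bd _ h; omega
        rw [Finset.sum_insert hnot, ← h4]
        have : g - 1 + 1 = g := by omega
        rw [this]; omega

/-- Uniqueness of the Zeckendorf set. -/
lemma zeck_unique : ∀ n : ℕ, ∀ S T : Finset ℕ,
    (∀ a ∈ S, 1 ≤ a) → (∀ a ∈ S, a + 1 ∉ S) → (∀ a ∈ T, 1 ≤ a) → (∀ a ∈ T, a + 1 ∉ T) →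
    n = ∑ j ∈ S, Nat.fib (j + 1) → n = ∑ j ∈ T, Nat.fib (j + 1) → S = T := by
  intro n
  induction n using Nat.strong_induction_on with
  | _ n ih =>
    intro S T hS1 hS2 hT1 hT2 hSn hTn
    rcases Nat.eq_zero_or_pos n with rfl | hn
    · have hs : S = ∅ := by
        by_contra h
        obtain ⟨a, ha⟩ := Finset.nonempty_of_ne_empty h
        have h1 : Nat.fib (a + 1) ≤ ∑ j ∈ S, Nat.fib (j+1) :=
          Finset.single_le_sum (f := fun j => Nat.fib (j + 1)) (fun i _ => Nat.zero_le _) ha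
        have : 0 < Nat.fib (a + 1) := Nat.fib_pos.2 (by have := hS1 a ha; omega)
        omega
      have ht : T = ∅ := by
        by_contra h
        obtain ⟨a, ha⟩ := Finset.nonempty_of_ne_empty h
        have h1 : Nat.fib (a + 1) ≤ ∑ j ∈ T, Nat.fib (j+1) :=
          Finset.single_le_sum (f := fun j => Nat.fib (j + 1)) (fun i _ => Nat.zero_le _) ha
        have : 0 < Nat.fib (a + 1) := Nat.fib_pos.2 (by have := hT1 a ha; omega)
        omega
      rw [hs, ht]
    · have hSne : S.Nonempty := by
        by_contra h
        rw [Finset.not_nonempty_iff_eq_empty.1 h] at hSn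
        simp at hSn; omega
      have hTne : T.Nonempty := by
        by_contra h
        rw [Finset.not_nonempty_iff_eq_empty.1 h] at hTn
        simp at hTn; omega
      set s := S.max' hSne with hs
      set t := T.max' hTne with ht
      have hsl : Nat.fib (s + 1) ≤ n := hSn ▸
        Finset.single_le_sum (f := fun j => Nat.fib (j + 1)) (fun i _ => Nat.zero_le _) (S.max'_mem hSne)
      have htl : Nat.fib (t + 1) ≤ n := hTn ▸
        Finset.single_le_sum (f := fun j => Nat.fib (j + 1)) (fun i _ => Nat.zero_le _) (T.max'_mem hTne)
      have hsu : n < Nat.fib (s + 2) := hSn ▸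
        zeck_sum_lt s S hS1 hS2 (fun a ha => S.le_max' a ha)
      have htu : n < Nat.fib (t + 2) := hTn ▸
        zeck_sum_lt t T hT1 hT2 (fun a ha => T.le_max' a ha)
      have hst : s = t := by
        by_contra h
        rcases Nat.lt_or_ge s t with hlt | hge
        · have : Nat.fib (s + 2) ≤ Nat.fib (t + 1) := Nat.fib_mono (by omega)
          omega
        · have hlt : t < s := by omega
          have : Nat.fib (t + 2) ≤ Nat.fib (s + 1) := Nat.fib_mono (by omega)
          omega
      have hsmem : s ∈ S := S.max'_mem hSne
      have htmem : s ∈ T := hst ▸ T.max'_mem hTne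
      have hsumS : ∑ j ∈ S.erase s, Nat.fib (j+1) + Nat.fib (s+1) = n := by
        rw [hSn]; exact Finset.sum_erase_add _ _ hsmem
      have hsumT : ∑ j ∈ T.erase s, Nat.fib (j+1) + Nat.fib (s+1) = n := by
        rw [hTn]; exact Finset.sum_erase_add _ _ htmem
      have hpos : 0 < Nat.fib (s + 1) := Nat.fib_pos.2 (by omega)
      have heq : S.erase s = T.erase s := by
        apply ih (n - Nat.fib (s+1)) (by omega)
        · exact fun a ha => hS1 a (Finset.mem_of_mem_erase ha)
        · intro a ha hc
          exact hS2 a (Finset.mem_of_mem_erase ha) (Finset.mem_of_mem_erase hc)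
        · exact fun a ha => hT1 a (Finset.mem_of_mem_erase ha)
        · intro a ha hc
          exact hT2 a (Finset.mem_of_mem_erase ha) (Finset.mem_of_mem_erase hc)
        · omega
        · omega
      calc S = insert s (S.erase s) := (Finset.insert_erase hsmem).symm
        _ = insert s (T.erase s) := by rw [heq]
        _ = T := Finset.insert_erase htmem

/-- Zeckendorf's theorem: every positive integer has a unique representation
`n = Σ_{k=1}^t ε(k) F_{t-k+1}` with 0/1 coefficients, `ε 1 = 1`, and no two
consecutive nonzero coefficients, where `F` is the shifted Fibonacci sequence. -/
theorem zeckendorf_theorem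
    (F : ℕ → ℕ) (hF1 : F 1 = 1) (hF2 : F 2 = 2)
    (hFrec : ∀ n : ℕ, 1 ≤ n → F (n + 2) = F (n + 1) + F n)
    (n : ℕ) (hn : 1 ≤ n) :
    ∃! εt : ℕ × (ℕ → ℕ),
      1 ≤ εt.1 ∧
      εt.2 1 = 1 ∧
      (∀ k, εt.2 k ≤ 1) ∧
      (∀ k, 1 ≤ k → k < εt.1 → εt.2 k * εt.2 (k + 1) = 0) ∧
      (∀ k, k = 0 ∨ εt.1 < k → εt.2 k = 0) ∧
      n = ∑ k ∈ Finset.Icc 1 εt.1, εt.2 k * F (εt.1 - k + 1) := by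
  -- F agrees with shifted fib
  have hF : ∀ j, 1 ≤ j → F j = Nat.fib (j + 1) := by
    intro j
    induction j using Nat.strong_induction_on with
    | _ j ih =>
      match j with
      | 0 => omega
      | 1 => intro _; simp [hF1]
      | 2 => intro _; rw [hF2]; rfl
      | (m+3) =>
        intro _
        rw [hFrec (m+1) (by omega), ih (m+2) (by omega) (by omega),
          ih (m+1) (by omega) (by omega)]
        have h1 : Nat.fib (m + 3 + 1) = Nat.fib (m + 2) + Nat.fib (m + 3) := Nat.fib_add_two
        have h2 : Nat.fib (m + 2 + 1) = Nat.fib (m + 3) := rfl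
        have h3 : Nat.fib (m + 1 + 1) = Nat.fib (m + 2) := rfl
        omega
  -- key: a pair satisfying the predicate corresponds to its Zeckendorf set
  -- translation of a pair's sum to a set sum
  have key : ∀ (t : ℕ) (ε : ℕ → ℕ), 1 ≤ t → ε 1 = 1 → (∀ k, ε k ≤ 1) →
      (∀ k, 1 ≤ k → k < t → ε k * ε (k + 1) = 0) → (∀ k, k = 0 ∨ t < k → ε k = 0) →
      let S := (Finset.Icc 1 t).filter (fun j => ε (t + 1 - j) = 1)
      (∀ a ∈ S, 1 ≤ a) ∧ (∀ a ∈ S, a + 1 ∉ S) ∧ (t ∈ S) ∧ (∀ a ∈ S, a ≤ t) ∧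
      ∑ k ∈ Finset.Icc 1 t, ε k * F (t - k + 1) = ∑ j ∈ S, Nat.fib (j + 1) := by
    intro t ε ht hε1 hεle hεcons hεout S
    have hmem : ∀ a ∈ S, 1 ≤ a ∧ a ≤ t ∧ ε (t + 1 - a) = 1 := by
      intro a ha
      have := Finset.mem_filter.1 ha
      have := Finset.mem_Icc.1 this.1
      exact ⟨this.1, this.2, (Finset.mem_filter.1 ha).2⟩
    refine ⟨fun a ha => (hmem a ha).1, ?_, ?_, fun a ha => (hmem a ha).2.1, ?_⟩
    · intro a ha hc
      obtain ⟨ha1, ha2, ha3⟩ := hmem a ha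
      obtain ⟨hc1, hc2, hc3⟩ := hmem _ hc
      have h1 : ε (t - a) = 1 := by
        have : t + 1 - (a + 1) = t - a := by omega
        rwa [this] at hc3
      have h2 : ε (t - a + 1) = 1 := by
        have : t + 1 - a = t - a + 1 := by omega
        rwa [this] at ha3
      have := hεcons (t - a) (by omega) (by omega)
      rw [h1, h2] at this
      omega
    · exact Finset.mem_filter.2 ⟨Finset.mem_Icc.2 ⟨ht, le_refl t⟩, by simpa using hε1⟩
    · have hre : ∑ k ∈ Finset.Icc 1 t, ε k * F (t - k + 1) =
          ∑ j ∈ Finset.Icc 1 t, ε (t + 1 - j) * F j := by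
        apply Finset.sum_nbij' (i := fun k => t + 1 - k) (j := fun k => t + 1 - k)
        · intro a ha; have := Finset.mem_Icc.1 ha; apply Finset.mem_Icc.2; omega
        · intro a ha; have := Finset.mem_Icc.1 ha; apply Finset.mem_Icc.2; omega
        · intro a ha; have := Finset.mem_Icc.1 ha; omega
        · intro a ha; have := Finset.mem_Icc.1 ha; omega
        · intro a ha
          have := Finset.mem_Icc.1 ha
          have h1 : t + 1 - (t + 1 - a) = a := by omega
          have h2 : t - a + 1 = t + 1 - a := by omega
          rw [h1, h2]
      rw [hre]
      rw [Finset.sum_filter]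
      apply Finset.sum_congr rfl
      intro j hj
      have hj' := Finset.mem_Icc.1 hj
      have hle := hεle (t + 1 - j)
      rw [hF j (by omega)]
      by_cases h : ε (t + 1 - j) = 1
      · simp [h]
      · have : ε (t + 1 - j) = 0 := by omega
        simp [h, this]
  -- existence
  obtain ⟨S, hS1, hS2, _, hSn⟩ := zeck_exists n
  have hSne : S.Nonempty := by
    by_contra h
    rw [Finset.not_nonempty_iff_eq_empty.1 h] at hSn
    simp at hSn; omega
  set t := S.max' hSne with htdef
  have ht1 : 1 ≤ t := hS1 _ (S.max'_mem hSne)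
  set ε : ℕ → ℕ := fun k => if 1 ≤ k ∧ k ≤ t ∧ (t + 1 - k) ∈ S then 1 else 0 with hεdef
  have hprop1 : 1 ≤ (t, ε).1 := ht1
  have hprop2 : (t, ε).2 1 = 1 := by
    simp only [hεdef]
    have : t + 1 - 1 = t := by omega
    simp [this, S.max'_mem hSne, ht1]; exact S.max'_mem hSne
  have hprop3 : ∀ k, (t, ε).2 k ≤ 1 := by
    intro k; simp only [hεdef]; split <;> omega
  have hprop4 : ∀ k, 1 ≤ k → k < (t, ε).1 → (t, ε).2 k * (t, ε).2 (k + 1) = 0 := by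
    intro k hk hkt
    simp only [hεdef]
    by_cases h2 : 1 ≤ k + 1 ∧ k + 1 ≤ t ∧ (t + 1 - (k + 1)) ∈ S
    · have hnm : ¬(1 ≤ k ∧ k ≤ t ∧ (t + 1 - k) ∈ S) := by
        rintro ⟨-, -, hm⟩
        have heq : t + 1 - (k + 1) + 1 = t + 1 - k := by omega
        exact hS2 _ h2.2.2 (heq ▸ hm)
      rw [if_neg hnm, Nat.zero_mul]
    · rw [if_neg h2, Nat.mul_zero]
  have hprop5 : ∀ k, k = 0 ∨ (t, ε).1 < k → (t, ε).2 k = 0 := by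
    intro k hk
    simp only [hεdef]
    have : ¬(1 ≤ k ∧ k ≤ t ∧ (t + 1 - k) ∈ S) := by
      rintro ⟨a, b, -⟩; omega
    simp [this]
  have hSsub : ∀ a ∈ S, 1 ≤ a ∧ a ≤ t := fun a ha => ⟨hS1 a ha, S.le_max' a ha⟩
  have hfilter : (Finset.Icc 1 t).filter (fun j => ε (t + 1 - j) = 1) = S := by
    apply Finset.ext
    intro j
    simp only [Finset.mem_filter, Finset.mem_Icc, hεdef]
    constructor
    · rintro ⟨⟨hj1, hj2⟩, hj3⟩
      split at hj3
      · next h =>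
        have : t + 1 - (t + 1 - j) = j := by omega
        exact this ▸ h.2.2
      · omega
    · intro hj
      obtain ⟨hj1, hj2⟩ := hSsub j hj
      have h1 : 1 ≤ t + 1 - j ∧ t + 1 - j ≤ t ∧ t + 1 - (t + 1 - j) ∈ S := by
        refine ⟨by omega, by omega, ?_⟩
        have : t + 1 - (t + 1 - j) = j := by omega
        rw [this]; exact hj
      exact ⟨⟨hj1, hj2⟩, by simp [h1]⟩
  have hprop6 : n = ∑ k ∈ Finset.Icc 1 (t, ε).1, (t, ε).2 k * F ((t, ε).1 - k + 1) := by
    obtain ⟨-, -, -, -, hsum⟩ := key t ε ht1 hprop2 hprop3 hprop4 hprop5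
    rw [hfilter] at hsum
    simpa [hsum] using hSn
  refine ⟨(t, ε), ⟨hprop1, hprop2, hprop3, hprop4, hprop5, hprop6⟩, ?_⟩
  -- uniqueness
  rintro ⟨t', ε'⟩ ⟨ht', hε'1, hε'le, hε'cons, hε'out, hsum'⟩
  obtain ⟨k1, k2, k3, k4, k5⟩ := key t' ε' ht' hε'1 hε'le hε'cons hε'out
  set S' := (Finset.Icc 1 t').filter (fun j => ε' (t' + 1 - j) = 1) with hS'def
  have hSeq : S' = S := by
    apply zeck_unique n S' S k1 k2 hS1 hS2
    · rw [← k5]; exact hsum'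
    · exact hSn
  have htt : t' = t := by
    have h1 : t' ∈ S := hSeq ▸ k3
    have h2 : t ≤ t' := by
      have := k4 t (hSeq ▸ (S.max'_mem hSne) : t ∈ S')
      exact this
    have h3 : t' ≤ t := S.le_max' t' h1
    omega
  have hεε : ε' = ε := by
    funext k
    by_cases hk : 1 ≤ k ∧ k ≤ t
    · have hjmem : t + 1 - k ∈ S ↔ ε' (t + 1 - (t + 1 - k)) = 1 := by
        rw [← hSeq, hS'def, htt]
        simp only [Finset.mem_filter, Finset.mem_Icc]
        constructor
        · exact fun h => h.2
        · intro h; exact ⟨⟨by omega, by omega⟩, h⟩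
      have hinv : t + 1 - (t + 1 - k) = k := by omega
      rw [hinv] at hjmem
      have hεk : ε k = if (t + 1 - k) ∈ S then 1 else 0 := by
        simp only [hεdef]
        by_cases h : (t + 1 - k) ∈ S <;> simp [h, hk.1, hk.2]
      have hle' : ε' k ≤ 1 := hε'le k
      by_cases h : (t + 1 - k) ∈ S
      · rw [hεk]; simp [h, hjmem.1 h]
      · rw [hεk]; simp only [h, if_false]
        by_contra hne
        have : ε' k = 1 := by omega
        exact h (hjmem.2 this)
    · have h1 : ε' k = 0 := hε'out k (by rw [htt]; omega)
      have h2 : ε k = 0 := hprop5 k (by simp only; omega)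
      rw [h1, h2]
  rw [htt, hεε]
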